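/- For every integer a ≥ 1, the polynomial P_{3,a}(x) = (8a³−2)x³ + (4a⁴+4a)x² + 4a²x + 1 is irreducible over the rationals. -/

import Mathlib

open Polynomial in
theorem P3a_irreducible (a : ℤ) (ha : 1 ≤ a) :
    Irreducible ((C (8 * a ^ 3 - 2) * X ^ 3 + C (4 * a ^ 4 + 4 * a) * X ^ 2
      + C (4 * a ^ 2) * X + 1).map (Int.castRingHom ℚ)) := by
  set P : ℚ[X] := (C (8 * a ^ 3 - 2) * X ^ 3 + C (4 * a ^ 4 + 4 * a) * X ^ 2
      + C (4 * a ^ 2) * X + 1).map (Int.castRingHom ℚ) with hP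
  have hlc : ((8 * a ^ 3 - 2 : ℤ) : ℚ) ≠ 0 := by
    intro h
    rw [Int.cast_eq_zero] at h
    have h3 : (1 : ℤ) ≤ a ^ 3 := by nlinarith
    omega
  have hdeg : P.natDegree = 3 := by
    rw [hP]
    simp only [Polynomial.map_add, Polynomial.map_mul, Polynomial.map_pow, map_C, map_X,
      Polynomial.map_one]
    compute_degree!
    intro h
    have h3 : (1 : ℤ) ≤ a ^ 3 := by nlinarith
    omega
  rw [Polynomial.irreducible_iff_roots_eq_zero_of_degree_le_three (by omega) (by omega)]
  rw [Multiset.eq_zero_iff_forall_notMem]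
  intro r hr
  have hP0 : P ≠ 0 := fun h => by simp [h] at hdeg
  rw [mem_roots hP0] at hr
  have hQ : (8 * (a:ℚ) ^ 3 - 2) * r ^ 3 + (4 * a ^ 4 + 4 * a) * r ^ 2
      + 4 * a ^ 2 * r + 1 = 0 := by
    have := hr
    simp only [hP, IsRoot, eval_map, eval₂_add, eval₂_mul, eval₂_pow, eval₂_C, eval₂_X,
      eval₂_one, Int.coe_castRingHom] at this
    push_cast at this
    linear_combination this
  set n : ℤ := r.num with hn
  set d : ℤ := (r.den : ℤ) with hd
  have hd0 : (d : ℚ) ≠ 0 := by rw [hd]; exact_mod_cast r.den_nz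
  have hrnd : (r : ℚ) = (n : ℚ) / (d : ℚ) := by exact_mod_cast (Rat.num_div_den r).symm
  have key : (8 * a ^ 3 - 2) * n ^ 3 + (4 * a ^ 4 + 4 * a) * n ^ 2 * d
      + 4 * a ^ 2 * n * d ^ 2 + d ^ 3 = 0 := by
    have h2 : (((8 * a ^ 3 - 2) * n ^ 3 + (4 * a ^ 4 + 4 * a) * n ^ 2 * d
        + 4 * a ^ 2 * n * d ^ 2 + d ^ 3 : ℚ)) * d ^ 3 = 0 := by
      rw [hrnd] at hQ
      field_simp at hQ
      linear_combination (d : ℚ) ^ 3 * hQ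
    rcases mul_eq_zero.mp h2 with h2 | h2
    · exact_mod_cast h2
    · exact absurd h2 (pow_ne_zero 3 hd0)
  have hcop : IsCoprime n d := by
    rw [Int.isCoprime_iff_gcd_eq_one]
    exact r.reduced
  have hnu : n = 1 ∨ n = -1 := by
    have hdvd : n ∣ d ^ 3 := by
      refine ⟨-((8 * a ^ 3 - 2) * n ^ 2 + (4 * a ^ 4 + 4 * a) * n * d + 4 * a ^ 2 * d ^ 2), ?_⟩
      linear_combination key
    have := ((hcop.pow_right (n := 3)).isUnit_of_dvd' dvd_rfl hdvd)
    rcases Int.isUnit_iff.mp this with h | h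
    · exact Or.inl h
    · exact Or.inr h
  have h4 := congrArg (fun z : ℤ => (z : ZMod 4)) key
  rcases hnu with h | h <;> rw [h] at h4 <;> push_cast at h4 <;>
    revert h4
  · generalize (a : ZMod 4) = x
    generalize (d : ZMod 4) = y
    revert x y
    decide
  · generalize (a : ZMod 4) = x
    generalize (d : ZMod 4) = y
    revert x y
    decide
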